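/- For λ, ε > 0, the function P₂(x) = λ Σᵢ [ |xᵢ|/ε - log(|xᵢ| + ε) + log ε ] is continuously differentiable on ℝⁿ with a Lipschitz continuous gradient whose Lipschitz modulus is λ/ε². -/

import Mathlib

open Real Filter InnerProductSpace

private lemma psi_deriv (lam ε : ℝ) (hε : 0 < ε) (u : ℝ) (hu : 0 < u + ε) :
    HasDerivAt (fun v : ℝ => lam * (v / ε - Real.log (v + ε) + Real.log ε))
      (lam * (1 / ε - 1 / (u + ε))) u := by
  have h1 : HasDerivAt (fun v : ℝ => v / ε) (1 / ε) u := by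
    simpa using (hasDerivAt_id u).div_const ε
  have h2 : HasDerivAt (fun v : ℝ => Real.log (v + ε)) (1 / (u + ε)) u := by
    simpa using ((hasDerivAt_id u).add_const ε).log (ne_of_gt hu)
  exact ((h1.sub h2).add_const (Real.log ε)).const_mul lam

private lemma phi_deriv (lam ε : ℝ) (hε : 0 < ε) (t : ℝ) :
    HasDerivAt (fun s : ℝ => lam * (|s| / ε - Real.log (|s| + ε) + Real.log ε))
      (lam * (t / (ε * (|t| + ε)))) t := by
  rcases lt_trichotomy t 0 with ht | ht | ht
  · have h := (psi_deriv lam ε hε (-t) (by linarith)).comp t (hasDerivAt_neg t)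
    have hev : (fun s : ℝ => lam * ((-s) / ε - Real.log (-s + ε) + Real.log ε))
        =ᶠ[nhds t] fun s : ℝ => lam * (|s| / ε - Real.log (|s| + ε) + Real.log ε) := by
      filter_upwards [Iio_mem_nhds ht] with s hs
      rw [abs_of_neg hs]
    have h2 := h.congr_of_eventuallyEq hev.symm
    refine h2.congr_deriv ?_
    rw [abs_of_neg ht]
    have hne : -t + ε ≠ 0 := ne_of_gt (by linarith)
    field_simp
    ring
  · subst ht
    have hψ : HasDerivAt (fun v : ℝ => lam * (v / ε - Real.log (v + ε) + Real.log ε)) 0 0 := by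
      have := psi_deriv lam ε hε 0 (by linarith)
      simpa using this
    have hval : lam * ((0:ℝ) / (ε * (|(0:ℝ)| + ε))) = 0 := by simp
    rw [hval, hasDerivAt_iff_tendsto_slope]
    have hs := hasDerivAt_iff_tendsto_slope.mp hψ
    have habs : Tendsto (fun s : ℝ => |s|) (nhdsWithin (0:ℝ) {(0:ℝ)}ᶜ)
        (nhdsWithin (0:ℝ) {(0:ℝ)}ᶜ) := by
      rw [tendsto_nhdsWithin_iff]
      constructor
      · have h0 : Tendsto (fun s : ℝ => |s|) (nhds (0:ℝ)) (nhds (0:ℝ)) := by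
          simpa using continuous_abs.tendsto (0:ℝ)
        exact h0.mono_left nhdsWithin_le_nhds
      · filter_upwards [self_mem_nhdsWithin] with s hs
        simpa using hs
    have hcomp := hs.comp habs
    rw [tendsto_zero_iff_abs_tendsto_zero]
    have habs0 : Tendsto (fun s : ℝ =>
        abs (slope (fun v : ℝ => lam * (v / ε - Real.log (v + ε) + Real.log ε)) 0 (abs s)))
        (nhdsWithin (0:ℝ) {(0:ℝ)}ᶜ) (nhds 0) := by
      simpa [Function.comp_def] using ((continuous_abs.tendsto (0:ℝ)).comp hcomp)
    refine habs0.congr' ?_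
    filter_upwards [self_mem_nhdsWithin] with s hs
    simp [Function.comp_def, slope_def_field, abs_div, abs_abs]
  · have h := psi_deriv lam ε hε t (by linarith)
    have hev : (fun s : ℝ => lam * (s / ε - Real.log (s + ε) + Real.log ε))
        =ᶠ[nhds t] fun s : ℝ => lam * (|s| / ε - Real.log (|s| + ε) + Real.log ε) := by
      filter_upwards [Ioi_mem_nhds ht] with s hs
      rw [abs_of_pos hs]
    have h2 := h.congr_of_eventuallyEq hev.symm
    refine h2.congr_deriv ?_
    rw [abs_of_pos ht]
    have hne : t + ε ≠ 0 := by positivity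
    field_simp
    ring

private lemma g_lip (lam ε : ℝ) (hlam : 0 ≤ lam) (hε : 0 < ε) (s t : ℝ) :
    |lam * (s / (ε * (|s| + ε))) - lam * (t / (ε * (|t| + ε)))| ≤ lam / ε ^ 2 * |s - t| := by
  have hds : 0 < |s| + ε := by positivity
  have hdt : 0 < |t| + ε := by positivity
  have key : |s / (|s| + ε) - t / (|t| + ε)| ≤ |s - t| / ε := by
    rw [div_sub_div _ _ (ne_of_gt hds) (ne_of_gt hdt), abs_div,
      abs_of_pos (mul_pos hds hdt), div_le_div_iff₀ (mul_pos hds hdt) hε]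
    rcases abs_cases s with ⟨hs1, hs2⟩ | ⟨hs1, hs2⟩ <;>
        rcases abs_cases t with ⟨ht1, ht2⟩ | ⟨ht1, ht2⟩ <;> rw [hs1, ht1]
    · have e : s * (t + ε) - (s + ε) * t = ε * (s - t) := by ring
      have h2 : ε * ε ≤ (s + ε) * (t + ε) := by nlinarith [mul_nonneg hs2 ht2]
      rw [e, abs_mul, abs_of_pos hε]
      calc ε * |s - t| * ε = |s - t| * (ε * ε) := by ring
        _ ≤ |s - t| * ((s + ε) * (t + ε)) := mul_le_mul_of_nonneg_left h2 (abs_nonneg _)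
    · have e : s * (-t + ε) - (s + ε) * t = -2 * (s * t) + ε * (s - t) := by ring
      have hst : s - t ≥ 0 := by linarith
      have hstm : s * t ≤ 0 := mul_nonpos_of_nonneg_of_nonpos hs2 ht2.le
      rw [e, abs_of_nonneg (by nlinarith [mul_nonneg hε.le hst]), abs_of_nonneg hst]
      nlinarith [mul_nonneg (neg_nonneg.mpr hstm) hst, sq_nonneg s, sq_nonneg t,
        mul_nonneg hε.le (add_nonneg (sq_nonneg s) (sq_nonneg t))]
    · have e : s * (t + ε) - (-s + ε) * t = 2 * (s * t) + ε * (s - t) := by ring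
      have hst : s - t ≤ 0 := by linarith
      have hstm : s * t ≤ 0 := mul_nonpos_of_nonpos_of_nonneg hs2.le ht2
      rw [e, abs_of_nonpos (by nlinarith [mul_nonneg hε.le (neg_nonneg.mpr hst)]), abs_of_nonpos hst]
      nlinarith [mul_nonneg (neg_nonneg.mpr hstm) (neg_nonneg.mpr hst), sq_nonneg s, sq_nonneg t,
        mul_nonneg hε.le (add_nonneg (sq_nonneg s) (sq_nonneg t))]
    · have e : s * (-t + ε) - (-s + ε) * t = ε * (s - t) := by ring
      have h2 : ε * ε ≤ (-s + ε) * (-t + ε) := by nlinarith [mul_pos (neg_pos.mpr hs2) (neg_pos.mpr ht2)]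
      rw [e, abs_mul, abs_of_pos hε]
      calc ε * |s - t| * ε = |s - t| * (ε * ε) := by ring
        _ ≤ |s - t| * ((-s + ε) * (-t + ε)) := mul_le_mul_of_nonneg_left h2 (abs_nonneg _)
  have hEq : lam * (s / (ε * (|s| + ε))) - lam * (t / (ε * (|t| + ε)))
      = (lam / ε) * (s / (|s| + ε) - t / (|t| + ε)) := by
    field_simp
  rw [hEq, abs_mul, abs_of_nonneg (div_nonneg hlam hε.le)]
  calc lam / ε * |s / (|s| + ε) - t / (|t| + ε)|
      ≤ lam / ε * (|s - t| / ε) := by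
        exact mul_le_mul_of_nonneg_left key (by positivity)
    _ = lam / ε ^ 2 * |s - t| := by rw [sq]; ring

theorem stmt11 {n : ℕ} (lam ε : ℝ) (hlam : 0 < lam) (hε : 0 < ε)
    (P₂ : EuclideanSpace ℝ (Fin n) → ℝ)
    (hP₂ : ∀ x, P₂ x = lam * ∑ i, (|x i| / ε - Real.log (|x i| + ε) + Real.log ε)) :
    ∃ G : EuclideanSpace ℝ (Fin n) → EuclideanSpace ℝ (Fin n),
      (∀ x, HasGradientAt P₂ (G x) x) ∧ Continuous G ∧
        LipschitzWith (lam / ε ^ 2).toNNReal G := by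
  set g : ℝ → ℝ := fun t => lam * (t / (ε * (|t| + ε))) with hg
  set G : EuclideanSpace ℝ (Fin n) → EuclideanSpace ℝ (Fin n) := fun x => WithLp.toLp 2 (fun i => g (x i)) with hG
  have hL0 : 0 ≤ lam / ε ^ 2 := by positivity
  have hLip : LipschitzWith (lam / ε ^ 2).toNNReal G := by
    apply LipschitzWith.of_dist_le_mul
    intro x y
    rw [Real.coe_toNNReal _ hL0, EuclideanSpace.dist_eq, EuclideanSpace.dist_eq]
    have hterm : ∀ i, dist (G x i) (G y i) ^ 2 ≤ (lam / ε ^ 2) ^ 2 * dist (x i) (y i) ^ 2 := by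
      intro i
      have h : dist (G x i) (G y i) ≤ lam / ε ^ 2 * dist (x i) (y i) := by
        simpa [Real.dist_eq] using g_lip lam ε hlam.le hε (x i) (y i)
      calc dist (G x i) (G y i) ^ 2 ≤ (lam / ε ^ 2 * dist (x i) (y i)) ^ 2 := by
            apply pow_le_pow_left₀ dist_nonneg h
        _ = (lam / ε ^ 2) ^ 2 * dist (x i) (y i) ^ 2 := by ring
    calc √(∑ i, dist (G x i) (G y i) ^ 2)
        ≤ √(∑ i, (lam / ε ^ 2) ^ 2 * dist (x i) (y i) ^ 2) :=
          Real.sqrt_le_sqrt (Finset.sum_le_sum fun i _ => hterm i)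
      _ = lam / ε ^ 2 * √(∑ i, dist (x i) (y i) ^ 2) := by
          rw [← Finset.mul_sum, Real.sqrt_mul (sq_nonneg _), Real.sqrt_sq hL0]
  refine ⟨G, ?_, hLip.continuous, hLip⟩
  intro x
  have hP : P₂ = fun y : EuclideanSpace ℝ (Fin n) =>
      ∑ i, lam * (|y i| / ε - Real.log (|y i| + ε) + Real.log ε) := by
    funext y
    rw [hP₂, Finset.mul_sum]
  rw [hasGradientAt_iff_hasFDerivAt, hP]
  have hsum : HasFDerivAt
      (fun y : EuclideanSpace ℝ (Fin n) =>
        ∑ i, lam * (|y i| / ε - Real.log (|y i| + ε) + Real.log ε))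
      (∑ i, ((1 : ℝ →L[ℝ] ℝ).smulRight (g (x i))).comp (EuclideanSpace.proj i)) x := by
    apply HasFDerivAt.fun_sum
    intro i _
    have hproj : HasFDerivAt (fun y : EuclideanSpace ℝ (Fin n) => y i)
        (EuclideanSpace.proj (𝕜 := ℝ) i) x := (EuclideanSpace.proj (𝕜 := ℝ) i).hasFDerivAt
    have hphi : HasFDerivAt (fun s : ℝ => lam * (|s| / ε - Real.log (|s| + ε) + Real.log ε))
        ((1 : ℝ →L[ℝ] ℝ).smulRight (g (x i))) (x i) := (phi_deriv lam ε hε (x i)).hasFDerivAt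
    have hc := hphi.comp x hproj
    exact hc
  refine hsum.congr_fderiv ?_
  apply ContinuousLinearMap.ext
  intro v
  simp [toDual, PiLp.inner_apply, RCLike.inner_apply, hG, mul_comm]
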